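/- arXiv:0803.2961 — 5 statements merged into one kernel-verified Lean document; each statement's English description precedes it below -/
import Mathlib

section
/- Let K and L be finite fields with |K| = q and |L| = q³, with K a subfield of L (L an algebra over K), and let ω be a primitive element of L, i.e. ω generates the multiplicative group Lˣ (equivalently, the order of ω in Lˣ is q³ − 1). Then the image of ω in the quotient group Lˣ / (image of Kˣ under the algebra map) has order q² + q + 1. (In Singer's identification of PG(2,q) with Lˣ mod Kˣ, this says that a Singer cycle has order q² + q + 1.) -/
/-- If `K ⊆ L` are finite fields with `|K| = q`, `|L| = q³`, and `ω` is a
primitive element of `L` (i.e. `ω` has order `q³ − 1` in `Lˣ`), then the image of `ω` in the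
quotient group `Lˣ / Kˣ` has order `q² + q + 1` (Singer). -/
theorem singer_cycle_order (q : ℕ) (K L : Type*) [Field K] [Field L] [Fintype K] [Fintype L]
    [Algebra K L] (hK : Fintype.card K = q) (hL : Fintype.card L = q ^ 3)
    (ω : Lˣ) (hω : orderOf ω = q ^ 3 - 1) :
    orderOf (QuotientGroup.mk ω :
      Lˣ ⧸ (Units.map (algebraMap K L).toMonoidHom).range) = q ^ 2 + q + 1 := by
  classical
  set H := (Units.map (algebraMap K L).toMonoidHom).range with hH
  have hq2 : 2 ≤ q := hK ▸ Fintype.one_lt_card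
  have hcardL : Nat.card Lˣ = q ^ 3 - 1 := by
    rw [Nat.card_eq_fintype_card, Fintype.card_units, hL]
  -- ω generates Lˣ
  have hgen : ∀ x : Lˣ, x ∈ Subgroup.zpowers ω := by
    have : Subgroup.zpowers ω = ⊤ := by
      apply Subgroup.eq_top_of_card_eq
      rw [Nat.card_zpowers, hω, hcardL]
    intro x; rw [this]; trivial
  -- mk ω generates quotient
  have hgenQ : Subgroup.zpowers (QuotientGroup.mk ω : Lˣ ⧸ H) = ⊤ := by
    rw [Subgroup.eq_top_iff']
    intro y
    obtain ⟨x, rfl⟩ := QuotientGroup.mk_surjective y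
    obtain ⟨n, rfl⟩ := hgen x
    exact ⟨n, by simp⟩
  -- card of H
  have hinj : Function.Injective (Units.map (algebraMap K L).toMonoidHom) :=
    Units.map_injective (algebraMap K L).injective
  have hcardH : Nat.card H = q - 1 := by
    rw [Nat.card_congr (MonoidHom.ofInjective hinj).toEquiv.symm,
      Nat.card_eq_fintype_card, Fintype.card_units, hK]
  have hcardQ : Nat.card (Lˣ ⧸ H) * (q - 1) = q ^ 3 - 1 := by
    rw [← hcardH, ← Subgroup.card_eq_card_quotient_mul_card_subgroup, hcardL]
  have key : q ^ 3 - 1 = (q ^ 2 + q + 1) * (q - 1) := by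
    obtain ⟨m, rfl⟩ := Nat.exists_eq_add_of_le (by omega : 1 ≤ q)
    rw [Nat.add_sub_cancel_left]
    have h : ((1 + m) ^ 2 + (1 + m) + 1) * m + 1 = (1 + m) ^ 3 := by ring
    omega
  have hcardQ' : Nat.card (Lˣ ⧸ H) = q ^ 2 + q + 1 := by
    rw [key] at hcardQ
    exact Nat.eq_of_mul_eq_mul_right (by omega) hcardQ
  rw [← Nat.card_zpowers, hgenQ, ← hcardQ']
  exact Nat.card_congr Subgroup.topEquiv.toEquiv
end

section
/- Let K and L be finite fields with |K| = q and |L| = q³, K a subfield of L, and let ω be a primitive element of L (the order of ω in Lˣ is q³ − 1). Write the minimal polynomial of ω over K as p(x) = x³ − a x² − b x − c with a, b, c ∈ K. Then the companion-type matrix C = [[0,1,0],[0,0,1],[c,b,a]] over K is invertible, and the image of C in PGL(3, K) = GL(3, K)/Z (the quotient of GL(3,K) by its center) has order exactly q² + q + 1. (C induces a Singer cycle of PG(2, q).) -/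
open Polynomial

private lemma gl_center_iff {n : Type*} [DecidableEq n] [Fintype n] {K : Type*} [Field K]
    (u : Matrix.GeneralLinearGroup n K) :
    u ∈ Subgroup.center (Matrix.GeneralLinearGroup n K) ↔
      ∃ k : K, (u : Matrix n n K) = Matrix.scalar n k := by
  constructor
  · intro hu
    have h : ∀ t : Matrix.TransvectionStruct n K, Commute t.toMatrix (u : Matrix n n K) := by
      intro t
      have := Subgroup.mem_center_iff.mp hu
        ⟨t.toMatrix, t.inv.toMatrix, t.mul_inv, t.inv_mul⟩
      exact congrArg Units.val this
    obtain ⟨k, hk⟩ := Matrix.mem_range_scalar_of_commute_transvectionStruct h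
    exact ⟨k, hk.symm⟩
  · rintro ⟨k, hk⟩
    rw [Subgroup.mem_center_iff]
    intro v
    apply Units.ext
    show (v : Matrix n n K) * u = (u : Matrix n n K) * v
    rw [hk]
    exact (Matrix.scalar_commute k (fun r => mul_comm k r) _).symm

/-- Let `K ⊆ L` be finite fields with `|K| = q`, `|L| = q³`, let `ω` be a
primitive element of `L` with minimal polynomial `x³ − a x² − b x − c` over `K`. Then the
companion-type matrix `C = [[0,1,0],[0,0,1],[c,b,a]]` is invertible and its image in
`PGL(3, K)` has order exactly `q² + q + 1` (it induces a Singer cycle of `PG(2, q)`). -/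
theorem singer_matrix_order (q : ℕ) (K L : Type*) [Field K] [Field L] [Fintype K] [Fintype L]
    [Algebra K L] (hK : Fintype.card K = q) (hL : Fintype.card L = q ^ 3)
    (ω : Lˣ) (hω : orderOf ω = q ^ 3 - 1) (a b c : K)
    (hmin : minpoly K (ω : L) = X ^ 3 - C a * X ^ 2 - C b * X - C c) :
    ∃ u : Matrix.GeneralLinearGroup (Fin 3) K,
      (u : Matrix (Fin 3) (Fin 3) K) = !![0, 1, 0; 0, 0, 1; c, b, a] ∧
      orderOf (QuotientGroup.mk u : Matrix.GeneralLinearGroup (Fin 3) K ⧸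
        Subgroup.center (Matrix.GeneralLinearGroup (Fin 3) K)) = q ^ 2 + q + 1 := by
  classical
  set N := q ^ 2 + q + 1 with hNdef
  set Cmat : Matrix (Fin 3) (Fin 3) K := !![0, 1, 0; 0, 0, 1; c, b, a] with hCmat
  have hq : 2 ≤ q := hK ▸ Fintype.one_lt_card
  have hq1 : 0 < q - 1 := by omega
  have harith : N * (q - 1) = q ^ 3 - 1 := by
    obtain ⟨m, rfl⟩ : ∃ m, q = m + 1 := ⟨q - 1, by omega⟩
    simp only [hNdef, Nat.add_sub_cancel]
    have h3 : (m + 1) ^ 3 = m ^ 3 + 3 * m ^ 2 + 3 * m + 1 := by ring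
    rw [h3]
    simp only [Nat.add_sub_cancel]
    ring
  -- finrank and basis
  have hfr : Module.finrank K L = 3 := by
    have h1 : Fintype.card L = Fintype.card K ^ Module.finrank K L := Module.card_eq_pow_finrank
    rw [hK, hL] at h1
    exact Nat.pow_right_injective hq h1.symm
  have hdeg : (minpoly K (ω : L)).natDegree = 3 := by
    rw [hmin]; compute_degree!
  have hli : LinearIndependent K fun i : Fin 3 => (ω : L) ^ (i : ℕ) := by
    have := linearIndependent_pow (K := K) (ω : L)
    rwa [hdeg] at this
  let bS : Module.Basis (Fin 3) K L :=
    basisOfLinearIndependentOfCardEqFinrank hli (by simp [hfr])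
  have hbS : ∀ i : Fin 3, bS i = (ω : L) ^ (i : ℕ) := fun i =>
    congrFun (coe_basisOfLinearIndependentOfCardEqFinrank hli _) i
  -- the left-multiplication matrix of ω is the transpose of Cmat
  have hω3' : (ω : L) ^ 3 = c • (1 : L) + b • (ω : L) + a • ((ω : L) ^ 2) := by
    have h0 := minpoly.aeval K (ω : L)
    rw [hmin] at h0
    simp only [map_sub, _root_.map_mul, map_pow, aeval_X, aeval_C] at h0
    simp only [Algebra.smul_def, mul_one]
    linear_combination h0
  have hφω : Algebra.leftMulMatrix bS (ω : L) = Cmat.transpose := by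
    have hω3 : (ω : L) ^ 3 = c • bS 0 + b • bS 1 + a • bS 2 := by
      rw [hbS 0, hbS 1, hbS 2]; simpa using hω3'
    ext i j
    rw [Algebra.leftMulMatrix_eq_repr_mul]
    have key : (ω : L) * bS j =
        Cmat.transpose 0 j • bS 0 + Cmat.transpose 1 j • bS 1 + Cmat.transpose 2 j • bS 2 := by
      fin_cases j
      · simp [hbS, hCmat]
      · simp only [hbS, hCmat]; norm_num; simp; ring
      · simp only [hbS, hCmat]; norm_num
        rw [show (ω : L) * (ω : L) ^ 2 = (ω : L) ^ 3 by ring]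
        exact hω3'
    rw [key]
    simp only [map_add, _root_.map_smul, Module.Basis.repr_self, Finsupp.coe_add, Finsupp.coe_smul,
      Pi.add_apply, Pi.smul_apply, Finsupp.single_apply, smul_eq_mul]
    fin_cases i <;> fin_cases j <;> simp [hCmat] <;> norm_num
  -- integrality and c ≠ 0
  have hint : IsIntegral K (ω : L) := IsIntegral.of_finite K _
  have hc0 : c ≠ 0 := by
    have h := minpoly.coeff_zero_ne_zero hint (Units.ne_zero ω)
    rw [hmin] at h
    simp only [coeff_sub, coeff_X_pow, coeff_C_mul, coeff_X, coeff_C] at h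
    norm_num at h
    exact h
  have hdet : Cmat.det = c := by
    simp [hCmat, Matrix.det_fin_three]
  -- the unit
  refine ⟨Matrix.nonsingInvUnit Cmat (by rw [hdet]; exact hc0.isUnit), rfl, ?_⟩
  set u : Matrix.GeneralLinearGroup (Fin 3) K :=
    Matrix.nonsingInvUnit Cmat (by rw [hdet]; exact hc0.isUnit) with hudef
  have hu : (u : Matrix (Fin 3) (Fin 3) K) = Cmat := rfl
  -- scalar powers of Cmat correspond to ω powers in K
  have hpow : ∀ (n : ℕ) (k : K),
      Cmat ^ n = Matrix.scalar (Fin 3) k ↔ (ω : L) ^ n = algebraMap K L k := by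
    intro n k
    have h1 : Cmat ^ n = (Algebra.leftMulMatrix bS ((ω : L) ^ n)).transpose := by
      rw [map_pow, hφω, ← Matrix.transpose_pow, Matrix.transpose_transpose]
    have h2 : (Matrix.scalar (Fin 3) k) = (Algebra.leftMulMatrix bS (algebraMap K L k)).transpose := by
      rw [AlgHom.commutes]
      simp [Matrix.algebraMap_eq_diagonal, Matrix.diagonal_transpose, Matrix.scalar]
    rw [h1, h2]
    constructor
    · intro h
      exact Algebra.leftMulMatrix_injective bS
        (Matrix.transpose_injective h)
    · intro h; rw [h]
  have hcen : ∀ n : ℕ,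
      u ^ n ∈ Subgroup.center (Matrix.GeneralLinearGroup (Fin 3) K) ↔
        ∃ k : K, (ω : L) ^ n = algebraMap K L k := by
    intro n
    rw [gl_center_iff]
    have : ((u ^ n : Matrix.GeneralLinearGroup (Fin 3) K) : Matrix (Fin 3) (Fin 3) K)
        = Cmat ^ n := by rw [Units.val_pow_eq_pow_val, hu]
    rw [this]
    exact exists_congr (fun k => hpow n k)
  have hmk : ∀ m : ℕ,
      ((QuotientGroup.mk u : Matrix.GeneralLinearGroup (Fin 3) K ⧸
          Subgroup.center (Matrix.GeneralLinearGroup (Fin 3) K)) ^ m = 1) ↔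
        u ^ m ∈ Subgroup.center (Matrix.GeneralLinearGroup (Fin 3) K) := by
    intro m
    rw [← QuotientGroup.mk'_apply, ← map_pow, QuotientGroup.mk'_apply, QuotientGroup.eq_one_iff]
  -- ω^N lands in K
  have hω31 : (ω : L) ^ (q ^ 3 - 1) = 1 := by
    have := pow_orderOf_eq_one ω
    rw [hω] at this
    simpa using congrArg Units.val this
  have hxq : ((ω : L) ^ N) ^ q = (ω : L) ^ N := by
    have hx1 : ((ω : L) ^ N) ^ (q - 1) = 1 := by
      rw [← pow_mul, harith, hω31]
    calc ((ω : L) ^ N) ^ q = ((ω : L) ^ N) ^ (q - 1) * (ω : L) ^ N := by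
          rw [← pow_succ]; congr 1; omega
      _ = (ω : L) ^ N := by rw [hx1, one_mul]
  have hxmem : ∃ k : K, (ω : L) ^ N = algebraMap K L k := by
    by_contra hnot
    push_neg at hnot
    have hPne : (X ^ q - X : L[X]) ≠ 0 := FiniteField.X_pow_card_sub_X_ne_zero L hq
    have himg : (ω : L) ^ N ∉ Finset.image (algebraMap K L) Finset.univ := by
      simp only [Finset.mem_image, Finset.mem_univ, true_and, not_exists]
      intro k hk
      exact hnot k hk.symm
    have hsub : insert ((ω : L) ^ N) (Finset.image (algebraMap K L) Finset.univ) ⊆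
        (X ^ q - X : L[X]).roots.toFinset := by
      intro y hy
      rw [Multiset.mem_toFinset, mem_roots hPne]
      rcases Finset.mem_insert.mp hy with rfl | hy
      · simp [IsRoot, hxq]
      · obtain ⟨k, -, rfl⟩ := Finset.mem_image.mp hy
        have hkq : k ^ q = k := by rw [← hK]; exact FiniteField.pow_card k
        simp [IsRoot, ← map_pow, hkq]
    have hcard : q + 1 ≤ q := by
      calc q + 1 = (insert ((ω : L) ^ N) (Finset.image (algebraMap K L) Finset.univ)).card := by
            rw [Finset.card_insert_of_notMem himg,
              Finset.card_image_of_injective _ (algebraMap K L).injective,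
              Finset.card_univ, hK]
        _ ≤ (X ^ q - X : L[X]).roots.toFinset.card := Finset.card_le_card hsub
        _ ≤ Multiset.card (X ^ q - X : L[X]).roots := Multiset.toFinset_card_le _
        _ ≤ (X ^ q - X : L[X]).natDegree := card_roots' _
        _ = q := FiniteField.X_pow_card_sub_X_natDegree_eq L hq
    omega
  -- conclude
  have h1 : orderOf (QuotientGroup.mk u : Matrix.GeneralLinearGroup (Fin 3) K ⧸
      Subgroup.center (Matrix.GeneralLinearGroup (Fin 3) K)) ∣ N :=
    orderOf_dvd_of_pow_eq_one ((hmk N).mpr ((hcen N).mpr hxmem))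
  have h2 : N ∣ orderOf (QuotientGroup.mk u : Matrix.GeneralLinearGroup (Fin 3) K ⧸
      Subgroup.center (Matrix.GeneralLinearGroup (Fin 3) K)) := by
    set n0 := orderOf (QuotientGroup.mk u : Matrix.GeneralLinearGroup (Fin 3) K ⧸
      Subgroup.center (Matrix.GeneralLinearGroup (Fin 3) K)) with hn0
    obtain ⟨k, hk⟩ := (hcen n0).mp ((hmk n0).mp (pow_orderOf_eq_one _))
    have hk0 : k ≠ 0 := by
      intro h
      rw [h, map_zero] at hk
      exact pow_ne_zero n0 (Units.ne_zero ω) hk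
    have hk1 : k ^ (q - 1) = 1 := by
      rw [← hK]; exact FiniteField.pow_card_sub_one_eq_one k hk0
    have hL1 : (ω : L) ^ (n0 * (q - 1)) = 1 := by
      rw [pow_mul, hk, ← map_pow, hk1, map_one]
    have hdvd : orderOf ω ∣ n0 * (q - 1) := by
      apply orderOf_dvd_of_pow_eq_one
      apply Units.ext
      push_cast
      exact hL1
    rw [hω, ← harith] at hdvd
    exact (Nat.mul_dvd_mul_iff_right hq1).mp hdvd
  exact Nat.dvd_antisymm h1 h2
end

section
/- Let q and k be natural numbers with k ∣ q² + q + 1 and k ≤ q + 2; set t = q − k + 2 and n = 2t. Let L be a field and b ∈ Lˣ an element of multiplicative order exactly k. Let G be a homogeneous polynomial of degree n in L[X₀, X₁, X₂] which is β-invariant (there is a nonzero λ ∈ L with G(bX₀, b^{q+1}X₁, X₂) = λ·G(X₀, X₁, X₂)), and assume the coefficient of X₁² X₂^{n−2} in G is nonzero. Then for every pair (l, m) with 0 ≤ l ≤ m ≤ n such that the coefficient of X₀^l X₁^{m−l} X₂^{n−m} in G is nonzero, one has m ≡ (q+1)·l + 2 (mod k); equivalently, since t ≡ q + 2 (mod k),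 m ≡ (t−1)·l + 2 (mod k). -/
open MvPolynomial


lemma coeff_aeval_scale {L : Type*} [CommSemiring L] (c : Fin 3 → L)
    (p : MvPolynomial (Fin 3) L) (d : Fin 3 →₀ ℕ) :
    coeff d (aeval (fun i => C (c i) * X i) p) = (∏ i, c i ^ d i) * coeff d p := by
  induction p using MvPolynomial.induction_on' with
  | add p q hp hq => simp only [map_add, coeff_add, hp, hq, mul_add]
  | monomial u a =>
    have hm : (monomial u a : MvPolynomial (Fin 3) L) = C a * ∏ x, (X x : MvPolynomial (Fin 3) L) ^ u x := by
      rw [monomial_eq, Finsupp.prod_fintype _ _ (fun i => pow_zero _)]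
    rw [aeval_monomial, Finsupp.prod_fintype _ _ (fun i => pow_zero _)]
    simp_rw [mul_pow]
    rw [Finset.prod_mul_distrib]
    simp_rw [← C_pow]
    rw [← map_prod, algebraMap_eq, mul_left_comm, ← hm, coeff_C_mul, coeff_monomial]
    split_ifs with h
    · subst h; rfl
    · simp


/-- (Lemma: congruence on exponents of nonzero terms.) Let `k ∣ q² + q + 1`,
`k ≤ q + 2`, `t = q − k + 2`, `n = 2t`, and let `G` be a β-invariant homogeneous polynomial
of degree `n` over `L` (with `b ∈ Lˣ` of order `k`) whose coefficient of `X₁² X₂^{n−2}` is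
nonzero. Then every nonzero term `a_{l, m−l} X₀^l X₁^{m−l} X₂^{n−m}` of `G` satisfies
`m ≡ (q+1)·l + 2 (mod k)`. -/
theorem exponent_congruence (q k : ℕ) (hdvd : k ∣ q ^ 2 + q + 1) (hkq : k ≤ q + 2)
    (L : Type*) [Field L] (b : Lˣ) (hb : orderOf b = k)
    (G : MvPolynomial (Fin 3) L)
    (hhom : G.IsHomogeneous (2 * (q - k + 2)))
    (lam : L) (hlam : lam ≠ 0)
    (hbeta : aeval ![C (b : L) * X 0, C ((b : L) ^ (q + 1)) * X 1,
      (X 2 : MvPolynomial (Fin 3) L)] G = C lam * G)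
    (hy2 : coeff (Finsupp.equivFunOnFinite.symm ![0, 2, 2 * (q - k + 2) - 2]) G ≠ 0) :
    ∀ l m, l ≤ m → m ≤ 2 * (q - k + 2) →
      coeff (Finsupp.equivFunOnFinite.symm ![l, m - l, 2 * (q - k + 2) - m]) G ≠ 0 →
      m ≡ (q + 1) * l + 2 [MOD k] := by
  set c : Fin 3 → L := ![(b : L), (b : L) ^ (q + 1), 1] with hc
  have hv : ![C (b : L) * X 0, C ((b : L) ^ (q + 1)) * X 1, (X 2 : MvPolynomial (Fin 3) L)]
      = fun i => C (c i) * X i := by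
    funext i
    fin_cases i <;> simp [hc]
  rw [hv] at hbeta
  -- every nonzero coefficient gives the eigenvalue relation
  have key : ∀ d : Fin 3 →₀ ℕ, coeff d G ≠ 0 → (∏ i, c i ^ d i) = lam := by
    intro d hd
    have h := congrArg (coeff d) hbeta
    rw [coeff_aeval_scale, coeff_C_mul] at h
    exact mul_right_cancel₀ hd h
  intro l m hlm hmn hco
  have h2 : ((b : L) ^ (q + 1)) ^ 2 = lam := by
    have := key _ hy2
    rw [Fin.prod_univ_three] at this
    simpa [hc] using this
  have h1 : (b : L) ^ l * ((b : L) ^ (q + 1)) ^ (m - l) = lam := by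
    have := key _ hco
    rw [Fin.prod_univ_three] at this
    simpa [hc] using this
  have hu : b ^ (l + (q + 1) * (m - l)) = b ^ ((q + 1) * 2) := by
    have hLval : ((b : L)) ^ (l + (q + 1) * (m - l)) = ((b : L)) ^ ((q + 1) * 2) := by
      rw [pow_add, pow_mul, pow_mul, h1, h2]
    ext
    simpa using hLval
  rw [pow_eq_pow_iff_modEq, hb] at hu
  -- now pure arithmetic mod k
  have hZ : ((l + (q + 1) * (m - l) : ℕ) : ZMod k) = (((q + 1) * 2 : ℕ) : ZMod k) :=
    (ZMod.natCast_eq_natCast_iff _ _ _).mpr hu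
  have hk : ((q : ZMod k)) ^ 2 + q + 1 = 0 := by
    have : ((q ^ 2 + q + 1 : ℕ) : ZMod k) = 0 := (ZMod.natCast_eq_zero_iff _ _).mpr hdvd
    push_cast at this
    exact this
  rw [← ZMod.natCast_eq_natCast_iff]
  push_cast [Nat.cast_sub hlm] at hZ ⊢
  linear_combination (-(q : ZMod k)) * hZ + ((m : ZMod k) - l - 2) * hk
end

section
/- Let L be a field, t ≥ 3 a natural number, ε₁, ε₂ ∈ L with ε₁³ = 1 and ε₂³ = 1, and c ∈ L. Define g(x, y) = y² + ε₁x²y^{2t−2} + ε₁²x^{2t−2} + c(x^t y^{t−1} + ε₂ x^{t−1} y + ε₂² x y^t). Then for all x, y ∈ L with x ≠ 0, setting x' = y/x^{t−1} and y' = y^{t−1}/x^{t−2}, one has the identity x^{2t−2}·(x'² + ε₁y'² + ε₁² + c·y' + c·ε₂·x' + c·ε₂²·x'·y') = g(x, y). In particular, if (x, y) with x ≠ 0 lies on the curve g = 0, then (x', y') lies on the conic x'² + ε₁y'² + ε₁² + c y' + c ε₂ x' + c ε₂² x' y' = 0 (so the rational transformation Φ: (x,y) ↦ (y/x^{t−1},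 y^{t−1}/x^{t−2}) maps the cyclic curve into a conic or a line). -/
private lemma conic_aux (L : Type*) [Field L] (u x y v ε₁ ε₂ c : L)
    (hu : u ≠ 0) (hx : x ≠ 0) :
    u ^ 2 * x ^ 2 *
      ((y / (u * x)) ^ 2 + ε₁ * (v * y / u) ^ 2 + ε₁ ^ 2 + c * (v * y / u)
        + c * ε₂ * (y / (u * x)) + c * ε₂ ^ 2 * (y / (u * x)) * (v * y / u)) =
    y ^ 2 + ε₁ * x ^ 2 * (v ^ 2 * y ^ 2) + ε₁ ^ 2 * (u ^ 2 * x ^ 2)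
      + c * (u * x ^ 2 * (v * y) + ε₂ * (u * x) * y + ε₂ ^ 2 * x * (v * y ^ 2)) := by
  have A1 : u ^ 2 * x ^ 2 * (y / (u * x)) ^ 2 = y ^ 2 := by field_simp
  have A2 : u ^ 2 * x ^ 2 * (ε₁ * (v * y / u) ^ 2) = ε₁ * x ^ 2 * (v ^ 2 * y ^ 2) := by
    field_simp
  have A4 : u ^ 2 * x ^ 2 * (c * (v * y / u)) = c * (u * x ^ 2 * (v * y)) := by
    field_simp
  have A5 : u ^ 2 * x ^ 2 * (c * ε₂ * (y / (u * x))) = c * (ε₂ * (u * x) * y) := by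
    field_simp
  have A6 : u ^ 2 * x ^ 2 * (c * ε₂ ^ 2 * (y / (u * x)) * (v * y / u))
      = c * (ε₂ ^ 2 * x * (v * y ^ 2)) := by
    field_simp
  rw [mul_add, mul_add, mul_add, mul_add, mul_add, A1, A2, A4, A5, A6]
  ring

/-- (The rational transformation `Φ` maps the cyclic curve to a conic.)
For `g(x,y) = y² + ε₁x²y^{2t−2} + ε₁²x^{2t−2} + c(x^t y^{t−1} + ε₂ x^{t−1} y + ε₂² x y^t)`
with `ε₁³ = ε₂³ = 1`, and `x ≠ 0`, setting `x' = y/x^{t−1}`, `y' = y^{t−1}/x^{t−2}`, one has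
`x^{2t−2}·(x'² + ε₁y'² + ε₁² + c y' + c ε₂ x' + c ε₂² x' y') = g(x,y)`; in particular points
of `g = 0` with `x ≠ 0` map to the conic `x'² + ε₁y'² + ε₁² + c y' + c ε₂ x' + c ε₂² x' y' = 0`. -/
theorem rational_transformation_to_conic (L : Type*) [Field L] (t : ℕ) (ht : 3 ≤ t)
    (ε₁ ε₂ c : L) (hε₁ : ε₁ ^ 3 = 1) (hε₂ : ε₂ ^ 3 = 1)
    (x y : L) (hx : x ≠ 0) :
    x ^ (2 * t - 2) *
        ((y / x ^ (t - 1)) ^ 2 + ε₁ * (y ^ (t - 1) / x ^ (t - 2)) ^ 2 + ε₁ ^ 2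
          + c * (y ^ (t - 1) / x ^ (t - 2)) + c * ε₂ * (y / x ^ (t - 1))
          + c * ε₂ ^ 2 * (y / x ^ (t - 1)) * (y ^ (t - 1) / x ^ (t - 2))) =
      y ^ 2 + ε₁ * x ^ 2 * y ^ (2 * t - 2) + ε₁ ^ 2 * x ^ (2 * t - 2)
        + c * (x ^ t * y ^ (t - 1) + ε₂ * x ^ (t - 1) * y + ε₂ ^ 2 * x * y ^ t) ∧
    (y ^ 2 + ε₁ * x ^ 2 * y ^ (2 * t - 2) + ε₁ ^ 2 * x ^ (2 * t - 2)
        + c * (x ^ t * y ^ (t - 1) + ε₂ * x ^ (t - 1) * y + ε₂ ^ 2 * x * y ^ t) = 0 →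
      (y / x ^ (t - 1)) ^ 2 + ε₁ * (y ^ (t - 1) / x ^ (t - 2)) ^ 2 + ε₁ ^ 2
          + c * (y ^ (t - 1) / x ^ (t - 2)) + c * ε₂ * (y / x ^ (t - 1))
          + c * ε₂ ^ 2 * (y / x ^ (t - 1)) * (y ^ (t - 1) / x ^ (t - 2)) = 0) := by
  obtain ⟨s, rfl⟩ : ∃ s, t = s + 3 := ⟨t - 3, by omega⟩
  have h1 : s + 3 - 1 = s + 2 := by omega
  have h2 : s + 3 - 2 = s + 1 := by omega
  have h3 : 2 * (s + 3) - 2 = 2 * s + 4 := by omega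
  rw [h1, h2, h3]
  have key : x ^ (2 * s + 4) *
      ((y / x ^ (s + 2)) ^ 2 + ε₁ * (y ^ (s + 2) / x ^ (s + 1)) ^ 2 + ε₁ ^ 2
        + c * (y ^ (s + 2) / x ^ (s + 1)) + c * ε₂ * (y / x ^ (s + 2))
        + c * ε₂ ^ 2 * (y / x ^ (s + 2)) * (y ^ (s + 2) / x ^ (s + 1))) =
      y ^ 2 + ε₁ * x ^ 2 * y ^ (2 * s + 4) + ε₁ ^ 2 * x ^ (2 * s + 4)
        + c * (x ^ (s + 3) * y ^ (s + 2) + ε₂ * x ^ (s + 2) * y + ε₂ ^ 2 * x * y ^ (s + 3)) := by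
    have e1 : x ^ (s + 2) = x ^ (s + 1) * x := by ring
    have e2 : x ^ (2 * s + 4) = (x ^ (s + 1)) ^ 2 * x ^ 2 := by rw [← pow_mul, ← pow_add]; ring_nf
    have e3 : x ^ (s + 3) = x ^ (s + 1) * x ^ 2 := by rw [← pow_add]
    have e4 : y ^ (s + 2) = y ^ (s + 1) * y := by ring
    have e5 : y ^ (2 * s + 4) = (y ^ (s + 1)) ^ 2 * y ^ 2 := by rw [← pow_mul, ← pow_add]; ring_nf
    have e6 : y ^ (s + 3) = y ^ (s + 1) * y ^ 2 := by rw [← pow_add]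
    have hu : x ^ (s + 1) ≠ 0 := pow_ne_zero _ hx
    generalize x ^ (s + 1) = u at e1 e2 e3 hu
    generalize y ^ (s + 1) = v at e4 e5 e6
    rw [e1, e2, e3, e4, e5, e6]
    exact conic_aux L u x y v ε₁ ε₂ c hu hx
  refine ⟨key, fun h0 => ?_⟩
  have hxp : x ^ (2 * s + 4) ≠ 0 := pow_ne_zero _ hx
  have := key.trans h0
  exact (mul_eq_zero.mp this).resolve_left hxp
end

section
/- Let L be a field, t ≥ 3 a natural number, ε₁, ε₂ ∈ L with ε₁³ = 1 and ε₂³ = 1, and c ∈ L. Define g(x, y) = y² + ε₁x²y^{2t−2} + ε₁²x^{2t−2} + c(x^t y^{t−1} + ε₂ x^{t−1} y + ε₂² x y^t). Then for every u ∈ L with u^{t²−3t+3} = 1 and for all x, y ∈ L, one has g(u·x, u^{t−1}·y) = u^{2t−2}·g(x, y). In particular, the linear collineation η: (x₁, x₂, x₃) ↦ (ux₁, u^{t−1}x₂, x₃) preserves the curve g = 0. -/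
/-- (Lemma: the collineation `η` preserves the cyclic curve.) For
`g(x,y) = y² + ε₁x²y^{2t−2} + ε₁²x^{2t−2} + c(x^t y^{t−1} + ε₂ x^{t−1} y + ε₂² x y^t)` with
`ε₁³ = ε₂³ = 1`, and any `u` with `u^{t²−3t+3} = 1`, one has
`g(u·x, u^{t−1}·y) = u^{2t−2}·g(x,y)` for all `x, y`. -/
theorem eta_preserves_cyclic_curve (L : Type*) [Field L] (t : ℕ) (ht : 3 ≤ t)
    (ε₁ ε₂ c : L) (hε₁ : ε₁ ^ 3 = 1) (hε₂ : ε₂ ^ 3 = 1)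
    (u : L) (hu : u ^ (t ^ 2 - 3 * t + 3) = 1) (x y : L) :
    (u ^ (t - 1) * y) ^ 2 + ε₁ * (u * x) ^ 2 * (u ^ (t - 1) * y) ^ (2 * t - 2)
        + ε₁ ^ 2 * (u * x) ^ (2 * t - 2)
        + c * ((u * x) ^ t * (u ^ (t - 1) * y) ^ (t - 1)
          + ε₂ * (u * x) ^ (t - 1) * (u ^ (t - 1) * y)
          + ε₂ ^ 2 * (u * x) * (u ^ (t - 1) * y) ^ t) =
      u ^ (2 * t - 2) *
        (y ^ 2 + ε₁ * x ^ 2 * y ^ (2 * t - 2) + ε₁ ^ 2 * x ^ (2 * t - 2)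
          + c * (x ^ t * y ^ (t - 1) + ε₂ * x ^ (t - 1) * y + ε₂ ^ 2 * x * y ^ t)) := by
  obtain ⟨k, rfl⟩ : ∃ k, t = k + 3 := ⟨t - 3, by omega⟩
  have h1 : k + 3 - 1 = k + 2 := by omega
  have h2 : 2 * (k + 3) - 2 = 2 * k + 4 := by omega
  have h3 : (k + 3) ^ 2 - 3 * (k + 3) + 3 = k ^ 2 + 3 * k + 3 := by
    have : (k + 3) ^ 2 = k ^ 2 + 6 * k + 9 := by ring
    omega
  rw [h1, h2] at *
  rw [h3] at hu
  have key : ∀ m j : ℕ, u ^ (m + (k ^ 2 + 3 * k + 3) * j) = u ^ m := by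
    intro m j
    rw [pow_add, pow_mul, hu, one_pow, mul_one]
  have e1 : u ^ ((k + 2) * 2) = u ^ (2 * k + 4) := by ring_nf
  have e2 : u ^ ((k + 2) * (2 * k + 4) + 2) = u ^ (2 * k + 4) := by
    rw [show (k + 2) * (2 * k + 4) + 2 = (2 * k + 4) + (k ^ 2 + 3 * k + 3) * 2 by ring, key]
  have e3 : u ^ ((k + 3) + (k + 2) * (k + 2)) = u ^ (2 * k + 4) := by
    rw [show (k + 3) + (k + 2) * (k + 2) = (2 * k + 4) + (k ^ 2 + 3 * k + 3) * 1 by ring, key]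
  have e4 : u ^ ((k + 2) + (k + 2)) = u ^ (2 * k + 4) := by ring_nf
  have e5 : u ^ (1 + (k + 2) * (k + 3)) = u ^ (2 * k + 4) := by
    rw [show 1 + (k + 2) * (k + 3) = (2 * k + 4) + (k ^ 2 + 3 * k + 3) * 1 by ring, key]
  calc (u ^ (k + 2) * y) ^ 2 + ε₁ * (u * x) ^ 2 * (u ^ (k + 2) * y) ^ (2 * k + 4)
        + ε₁ ^ 2 * (u * x) ^ (2 * k + 4)
        + c * ((u * x) ^ (k + 3) * (u ^ (k + 2) * y) ^ (k + 2)
          + ε₂ * (u * x) ^ (k + 2) * (u ^ (k + 2) * y)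
          + ε₂ ^ 2 * (u * x) * (u ^ (k + 2) * y) ^ (k + 3))
      = u ^ ((k + 2) * 2) * y ^ 2
        + ε₁ * (u ^ ((k + 2) * (2 * k + 4) + 2) * (x ^ 2 * y ^ (2 * k + 4)))
        + ε₁ ^ 2 * (u ^ (2 * k + 4) * x ^ (2 * k + 4))
        + c * (u ^ ((k + 3) + (k + 2) * (k + 2)) * (x ^ (k + 3) * y ^ (k + 2))
          + ε₂ * (u ^ ((k + 2) + (k + 2)) * (x ^ (k + 2) * y))
          + ε₂ ^ 2 * (u ^ (1 + (k + 2) * (k + 3)) * (x * y ^ (k + 3)))) := by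
        simp only [mul_pow, ← pow_mul, ← pow_add, pow_add, pow_mul]; ring
    _ = u ^ (2 * k + 4) *
        (y ^ 2 + ε₁ * x ^ 2 * y ^ (2 * k + 4) + ε₁ ^ 2 * x ^ (2 * k + 4)
          + c * (x ^ (k + 3) * y ^ (k + 2) + ε₂ * x ^ (k + 2) * y + ε₂ ^ 2 * x * y ^ (k + 3))) := by
        rw [e1, e2, e3, e4, e5]; ring
end
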